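/- (Dominated Convergence Theorem) Suppose α is a continuous rotationally symmetric norm on L^∞(𝕋). Let G_α = {φ ∈ MP(𝕋) : α(h∘φ) = α(h) for all h ∈ L^∞(𝕋)}. Suppose g ∈ L^α(𝕋), let K be the convex hull of {|g∘φ|·u : u ∈ L^∞(𝕋), ‖u‖_∞ ≤ 1, φ ∈ G_α}, and let K̄^m denote the closure of K in the topology of convergence in m-measure. If {fₙ} is a sequence of measurable functions with |fₙ| ∈ K̄^m for every n and fₙ → f in measure, then f ∈ L^α(𝕋) and α(fₙ − f) → 0. -/

import Mathlib

open MeasureTheory Filter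
open scoped ENNReal Real

noncomputable section

instance fact_two_pi_pos : Fact ((0:ℝ) < 2 * Real.pi) := ⟨by positivity⟩

/-- The circle `𝕋`, modelled additively as `ℝ / 2πℤ`. -/
abbrev 𝕋 : Type := AddCircle (2 * Real.pi)

/-- Normalized Haar (arc-length) probability measure on `𝕋`. -/
abbrev m : Measure 𝕋 := AddCircle.haarAddCircle

/-- A rotationally symmetric norm on `L^∞(𝕋)`, extended to all measurable functions via
`α f = sup { α s : s simple, |s| ≤ |f| a.e. }`. -/
structure RotNorm where
  α : (𝕋 → ℂ) → ℝ≥0∞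
  ae_eq : ∀ f g : 𝕋 → ℂ, f =ᵐ[m] g → α f = α g
  add_le : ∀ f g : 𝕋 → ℂ, α (f + g) ≤ α f + α g
  smul_eq : ∀ (c : ℂ) (f : 𝕋 → ℂ), α (c • f) = (‖c‖₊ : ℝ≥0∞) * α f
  one_eq : α 1 = 1
  abs_eq : ∀ f : 𝕋 → ℂ, α (fun z => (‖f z‖ : ℂ)) = α f
  rot_eq : ∀ (w : 𝕋) (f : 𝕋 → ℂ), α (fun z => f (z - w)) = α f
  simple_sup : ∀ f : 𝕋 → ℂ, AEMeasurable f m →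
    α f = ⨆ (s : SimpleFunc 𝕋 ℂ) (_ : ∀ᵐ z ∂m, ‖s z‖ ≤ ‖f z‖), α s

/-- `α` is in addition a symmetric gauge norm: invariant under all invertible
measure-preserving transformations of `𝕋`. -/
def RotNorm.IsSymmGauge (N : RotNorm) : Prop :=
  ∀ φ : 𝕋 ≃ᵐ 𝕋, MeasurePreserving (⇑φ) m m → ∀ f : 𝕋 → ℂ, N.α (f ∘ ⇑φ) = N.α f

/-- Continuity of a norm: `α(χ_E) → 0` as `m(E) → 0⁺`. -/
def IsContNorm (γ : (𝕋 → ℂ) → ℝ≥0∞) : Prop :=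
  ∀ ε : ℝ≥0∞, 0 < ε → ∃ δ : ℝ≥0∞, 0 < δ ∧
    ∀ E : Set 𝕋, MeasurableSet E → m E < δ → γ (E.indicator fun _ => (1:ℂ)) < ε

/-- Membership in `ℒ^α(𝕋)`: measurable with finite norm. -/
def MemScriptL (γ : (𝕋 → ℂ) → ℝ≥0∞) (f : 𝕋 → ℂ) : Prop :=
  AEMeasurable f m ∧ γ f ≠ ∞

/-- Membership in `L^α(𝕋)`: the `α`-closure of `L^∞(𝕋)` in `ℒ^α(𝕋)`. -/
def MemL (γ : (𝕋 → ℂ) → ℝ≥0∞) (f : 𝕋 → ℂ) : Prop :=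
  MemScriptL γ f ∧ ∀ ε : ℝ≥0∞, 0 < ε → ∃ g : 𝕋 → ℂ, MemLp g ⊤ m ∧ γ (f - g) < ε

/-- Strong continuity: continuity together with `L^α = ℒ^α`. -/
def StronglyCont (γ : (𝕋 → ℂ) → ℝ≥0∞) : Prop :=
  IsContNorm γ ∧ ∀ f : 𝕋 → ℂ, MemScriptL γ f → MemL γ f

/-- The dual norm `α′`. -/
def dualOf (γ : (𝕋 → ℂ) → ℝ≥0∞) (f : 𝕋 → ℂ) : ℝ≥0∞ :=
  ⨆ (h : 𝕋 → ℂ) (_ : MemLp h ⊤ m) (_ : γ h ≤ 1), ∫⁻ z, (‖f z * h z‖₊ : ℝ≥0∞) ∂m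

/-- The linear span of the analytic monomials `zⁿ`, `n ≥ 0`. -/
def analyticPolys : Submodule ℂ (𝕋 → ℂ) :=
  Submodule.span ℂ (Set.range fun n : ℕ => ((fourier (n : ℤ) : C(𝕋, ℂ)) : 𝕋 → ℂ))

/-- Membership in `H^α(𝕋)`: the `α`-closure of the span of `{zⁿ : n ≥ 0}`. -/
def MemH (γ : (𝕋 → ℂ) → ℝ≥0∞) (f : 𝕋 → ℂ) : Prop :=
  MemScriptL γ f ∧ ∀ ε : ℝ≥0∞, 0 < ε → ∃ p ∈ analyticPolys, γ (f - p) < ε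

/-- Membership in the classical Hardy space `H¹(𝕋)`. -/
def MemH1 (f : 𝕋 → ℂ) : Prop :=
  Integrable f m ∧ ∀ n : ℤ, n < 0 → fourierCoeff f n = 0

/-- The point `e^{it}` of the unit circle in `ℂ` corresponding to `t ∈ 𝕋`. -/
def eCirc : 𝕋 → ℂ := fun t => (AddCircle.toCircle t : ℂ)


open scoped NNReal

namespace RotNorm

variable (N : RotNorm)

lemma alpha_zero : N.α 0 = 0 := by
  have h := N.smul_eq 0 0
  simpa using h

lemma alpha_neg (f : 𝕋 → ℂ) : N.α (-f) = N.α f := by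
  have h := N.smul_eq (-1) f
  simpa using h

lemma alpha_const (c : ℂ) : N.α (fun _ => c) = (‖c‖₊ : ℝ≥0∞) := by
  have h1 : (fun _ : 𝕋 => c) = c • (1 : 𝕋 → ℂ) := by funext z; simp
  rw [h1, N.smul_eq, N.one_eq, mul_one]

lemma alpha_sub_le (f g : 𝕋 → ℂ) : N.α (f - g) ≤ N.α f + N.α g := by
  rw [sub_eq_add_neg]
  refine (N.add_le f (-g)).trans ?_
  rw [N.alpha_neg]

lemma alpha_mono {f g : 𝕋 → ℂ} (hf : AEMeasurable f m) (hg : AEMeasurable g m)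
    (h : ∀ᵐ z ∂m, ‖f z‖ ≤ ‖g z‖) : N.α f ≤ N.α g := by
  rw [N.simple_sup f hf, N.simple_sup g hg]
  refine iSup₂_le fun s hs => ?_
  exact le_iSup₂_of_le s ((hs.and h).mono fun z hz => hz.1.trans hz.2) le_rfl

lemma alpha_le_of_bound {f : 𝕋 → ℂ} (hf : AEMeasurable f m) {C : ℝ≥0}
    (h : ∀ᵐ z ∂m, ‖f z‖ ≤ (C:ℝ)) : N.α f ≤ (C : ℝ≥0∞) := by
  have h2 : N.α f ≤ N.α (fun _ => ((C : ℝ) : ℂ)) := by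
    refine N.alpha_mono hf aemeasurable_const (h.mono fun z hz => ?_)
    simpa using hz.trans (le_abs_self _)
  rw [N.alpha_const] at h2
  simpa using h2

lemma alpha_indicator_le_of_bound {f : 𝕋 → ℂ} (hf : AEMeasurable f m) {C : ℝ≥0}
    (h : ∀ᵐ z ∂m, ‖f z‖ ≤ (C:ℝ)) {E : Set 𝕋} (hE : MeasurableSet E) :
    N.α (E.indicator f) ≤ (C : ℝ≥0∞) * N.α (E.indicator fun _ => (1 : ℂ)) := by
  have h1 : E.indicator (fun _ => ((C : ℝ) : ℂ)) = ((C : ℝ) : ℂ) • E.indicator (fun _ => (1 : ℂ)) := by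
    funext z; by_cases hz : z ∈ E <;> simp [hz]
  have h2 : N.α (E.indicator f) ≤ N.α (E.indicator (fun _ => ((C : ℝ) : ℂ))) := by
    refine N.alpha_mono (hf.indicator hE) (aemeasurable_const.indicator hE)
      (h.mono fun z hz => ?_)
    by_cases hzE : z ∈ E <;> simp [hzE, Set.indicator_of_mem, Set.indicator_of_notMem]
    · simpa using hz.trans (le_abs_self _)
  rw [h1, N.smul_eq] at h2
  refine h2.trans (le_of_eq ?_)
  congr 1
  simp

lemma simpleFunc_memTop (t : SimpleFunc 𝕋 ℂ) : MemLp (⇑t) ⊤ m := by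
  obtain ⟨C, hC⟩ := t.exists_forall_norm_le
  exact memLp_top_of_bound t.aestronglyMeasurable C (Filter.Eventually.of_forall hC)

lemma alpha_comp_le {φ : 𝕋 ≃ᵐ 𝕋} (hφ : MeasurePreserving (⇑φ) m m)
    (hα : ∀ h : 𝕋 → ℂ, MemLp h ⊤ m → N.α (h ∘ ⇑φ) = N.α h)
    {f : 𝕋 → ℂ} (hf : AEMeasurable f m) : N.α (f ∘ ⇑φ) ≤ N.α f := by
  have hsymm : MeasurePreserving (⇑φ.symm) m m := MeasurePreserving.symm φ hφ
  have hfc : AEMeasurable (f ∘ ⇑φ) m :=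
    hf.comp_quasiMeasurePreserving hφ.quasiMeasurePreserving
  rw [N.simple_sup _ hfc, N.simple_sup f hf]
  refine iSup₂_le fun s hs => ?_
  set t : SimpleFunc 𝕋 ℂ := s.comp (⇑φ.symm) φ.symm.measurable with ht
  have hts : ∀ᵐ z ∂m, ‖t z‖ ≤ ‖f z‖ := by
    have h2 := hsymm.quasiMeasurePreserving.ae hs
    refine h2.mono fun z hz => ?_
    simpa [ht, SimpleFunc.coe_comp, Function.comp] using hz
  have hst : N.α (⇑s) = N.α (⇑t) := by
    have h2 := hα (⇑t) (simpleFunc_memTop t)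
    have h3 : (⇑t) ∘ ⇑φ = ⇑s := by
      funext z; simp [ht, SimpleFunc.coe_comp, Function.comp]
    rw [h3] at h2
    exact h2
  rw [hst]
  exact le_iSup₂_of_le t hts le_rfl

/-- Fatou-type lemma: a constant bound on `α` passes to limits in measure. -/
lemma alpha_fatou (hc : IsContNorm N.α) {h : ℕ → 𝕋 → ℂ} {g : 𝕋 → ℂ} {B : ℝ≥0∞}
    (hmeas : ∀ k, AEMeasurable (h k) m) (hgmeas : AEMeasurable g m)
    (htend : TendstoInMeasure m h atTop g)
    (hB : ∀ k, N.α (h k) ≤ B) : N.α g ≤ B := by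
  rw [N.simple_sup g hgmeas]
  refine iSup₂_le fun s hs => ?_
  rcases eq_top_or_lt_top B with hBtop | hBlt
  · rw [hBtop]; exact le_top
  refine ENNReal.le_of_forall_pos_le_add fun θ hθ _ => ?_
  -- bound on s
  obtain ⟨C, hC⟩ := s.exists_forall_norm_le
  set Cn : ℝ≥0 := C.toNNReal with hCn
  have hCb : ∀ x, ‖s x‖ ≤ (Cn : ℝ) := fun x => (hC x).trans (Real.le_coe_toNNReal C)
  -- small parameter
  set θ2 : ℝ≥0 := θ / 2 with hθ2
  have hθ2pos : 0 < θ2 := by positivity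
  -- continuity of the norm
  have hεpos : (0 : ℝ≥0∞) < ((θ2 : ℝ≥0∞)) / (Cn + 1) :=
    ENNReal.div_pos (by exact_mod_cast hθ2pos.ne') (by simp)
  obtain ⟨δ, hδpos, hδ⟩ := hc _ hεpos
  -- measurable representatives
  set h' : ℕ → 𝕋 → ℂ := fun k => (hmeas k).mk _ with hh'
  have h'meas : ∀ k, Measurable (h' k) := fun k => (hmeas k).measurable_mk
  -- the bad sets
  set E : ℕ → Set 𝕋 := fun k => {z | (θ2 : ℝ) ≤ ‖s z‖ - ‖h' k z‖} with hE
  have hEmeas : ∀ k, MeasurableSet (E k) :=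
    fun k => measurableSet_le measurable_const (s.measurable.norm.sub (h'meas k).norm)
  have hEsub : ∀ k, E k ≤ᵐ[m] {z | (θ2 : ℝ) ≤ dist (h k z) (g z)} := by
    intro k
    filter_upwards [hs, (hmeas k).ae_eq_mk] with z hz1 hz2
    intro hzE
    have h1 : (θ2 : ℝ) ≤ ‖g z‖ - ‖h k z‖ := by
      rw [hz2]; exact le_trans hzE (by have := hz1; linarith [hz1])
    calc (θ2 : ℝ) ≤ ‖g z‖ - ‖h k z‖ := h1
      _ ≤ ‖g z - h k z‖ := by
          have := norm_sub_norm_le (g z) (h k z); linarith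
      _ = dist (h k z) (g z) := by rw [dist_eq_norm, norm_sub_rev]
  -- eventually the bad set is small
  have htends := tendstoInMeasure_iff_dist.mp htend (θ2 : ℝ) (by exact_mod_cast hθ2pos)
  have hev : ∀ᶠ k in atTop, m (E k) < δ := by
    have h2 : ∀ᶠ k in atTop, m {z | (θ2 : ℝ) ≤ dist (h k z) (g z)} < δ :=
      htends.eventually_lt_const hδpos
    filter_upwards [h2] with k hk
    exact lt_of_le_of_lt (measure_mono_ae (hEsub k)) hk
  obtain ⟨k, hk⟩ := hev.exists
  -- split s along E k
  have hsplit : (⇑s : 𝕋 → ℂ) = (E k).indicator ⇑s + (E k)ᶜ.indicator ⇑s :=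
    (Set.indicator_self_add_compl (E k) ⇑s).symm
  have hα1 : N.α ((E k).indicator ⇑s) ≤ (θ2 : ℝ≥0∞) := by
    have := N.alpha_indicator_le_of_bound s.aemeasurable
      (Filter.Eventually.of_forall hCb) (hEmeas k)
    refine this.trans ?_
    calc (Cn : ℝ≥0∞) * N.α ((E k).indicator fun _ => (1:ℂ))
        ≤ (Cn + 1) * (((θ2 : ℝ≥0∞)) / (Cn + 1)) := by
          refine mul_le_mul' (by simp) (le_of_lt (hδ _ (hEmeas k) hk))
      _ = (θ2 : ℝ≥0∞) := ENNReal.mul_div_cancel' (by simp) (by simp)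
  have hα2 : N.α ((E k)ᶜ.indicator ⇑s) ≤ N.α (h k) + (θ2 : ℝ≥0∞) := by
    set q : 𝕋 → ℂ := fun z => ((‖h k z‖ + (θ2 : ℝ) : ℝ) : ℂ) with hq
    have hqmeas : AEMeasurable q m :=
      (Complex.measurable_ofReal.comp_aemeasurable ((hmeas k).norm.add aemeasurable_const))
    have hmono : N.α ((E k)ᶜ.indicator ⇑s) ≤ N.α q := by
      refine N.alpha_mono (s.aemeasurable.indicator (hEmeas k).compl) hqmeas ?_
      filter_upwards [(hmeas k).ae_eq_mk] with z hz
      have hqnn : 0 ≤ ‖h k z‖ + (θ2 : ℝ) := by positivity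
      have hqval : ‖q z‖ = ‖h k z‖ + (θ2 : ℝ) := by
        have hqz : q z = ((‖h k z‖ + (θ2 : ℝ) : ℝ) : ℂ) := rfl
        rw [hqz, Complex.norm_real, Real.norm_eq_abs, abs_of_nonneg hqnn]
      rw [hqval]
      by_cases hzE : z ∈ (E k)ᶜ
      · rw [Set.indicator_of_mem hzE]
        have h3 : ¬ ((θ2 : ℝ) ≤ ‖s z‖ - ‖h k z‖) := by
          rw [hz]; exact hzE
        push_neg at h3
        linarith
      · rw [Set.indicator_of_notMem hzE]
        simp only [norm_zero]
        positivity
    refine hmono.trans ?_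
    have hqsplit : q = (fun z => ((‖h k z‖ : ℝ) : ℂ)) + (fun _ => (((θ2 : ℝ)) : ℂ)) := by
      funext z; simp only [hq, Pi.add_apply]; push_cast; ring
    rw [hqsplit]
    refine (N.add_le _ _).trans ?_
    rw [N.abs_eq (h k), N.alpha_const]
    gcongr
    simp
  calc N.α ⇑s ≤ N.α ((E k).indicator ⇑s) + N.α ((E k)ᶜ.indicator ⇑s) := by
        conv_lhs => rw [hsplit]
        exact N.add_le _ _
    _ ≤ (θ2 : ℝ≥0∞) + (N.α (h k) + (θ2 : ℝ≥0∞)) := add_le_add hα1 hα2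
    _ ≤ (θ2 : ℝ≥0∞) + (B + (θ2 : ℝ≥0∞)) := by gcongr; exact hB k
    _ = B + ((θ2 : ℝ≥0∞) + (θ2 : ℝ≥0∞)) := by ring
    _ = B + (θ : ℝ≥0∞) := by
        congr 1
        rw [← ENNReal.coe_add]
        congr 1
        rw [hθ2]
        exact add_halves θ


/-- The set of functions with `α`-norm at most `B` which are uniformly `α`-small
on sets of measure less than `δ`. -/
def GoodSet (N : RotNorm) (B δ ε : ℝ≥0∞) : Set (𝕋 → ℂ) :=
  {h | AEMeasurable h m ∧ N.α h ≤ B ∧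
    ∀ E : Set 𝕋, MeasurableSet E → m E < δ → N.α (E.indicator h) ≤ ε}

lemma alpha_smul_real (a : ℝ) (f : 𝕋 → ℂ) : N.α (a • f) = (‖a‖₊ : ℝ≥0∞) * N.α f := by
  have h1 : (a • f) = ((a : ℂ)) • f := by
    funext z; simp [Complex.real_smul]
  rw [h1, N.smul_eq, Complex.nnnorm_real]

lemma goodSet_convex (B δ ε : ℝ≥0∞) : Convex ℝ (GoodSet N B δ ε) := by
  intro x hx y hy a b ha hb hab
  obtain ⟨hxm, hxB, hxE⟩ := hx
  obtain ⟨hym, hyB, hyE⟩ := hy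
  have hcoef : (‖a‖₊ : ℝ≥0∞) + (‖b‖₊ : ℝ≥0∞) = 1 := by
    rw [← ENNReal.coe_add]
    norm_cast
    rw [Real.nnnorm_of_nonneg ha, Real.nnnorm_of_nonneg hb]
    exact NNReal.coe_injective (by simp [hab])
  have key : ∀ u v : 𝕋 → ℂ, ∀ c : ℝ≥0∞, N.α u ≤ c → N.α v ≤ c →
      N.α (a • u + b • v) ≤ c := by
    intro u v c hu hv
    calc N.α (a • u + b • v) ≤ N.α (a • u) + N.α (b • v) := N.add_le _ _
      _ = (‖a‖₊ : ℝ≥0∞) * N.α u + (‖b‖₊ : ℝ≥0∞) * N.α v := by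
          rw [N.alpha_smul_real, N.alpha_smul_real]
      _ ≤ (‖a‖₊ : ℝ≥0∞) * c + (‖b‖₊ : ℝ≥0∞) * c := by gcongr
      _ = ((‖a‖₊ : ℝ≥0∞) + (‖b‖₊ : ℝ≥0∞)) * c := (add_mul _ _ _).symm
      _ = c := by rw [hcoef, one_mul]
  refine ⟨(hxm.const_smul a).add (hym.const_smul b), key x y B hxB hyB, ?_⟩
  intro E hE hmE
  have hid : E.indicator (a • x + b • y) = a • E.indicator x + b • E.indicator y := by
    funext z; by_cases hz : z ∈ E <;> simp [hz]
  rw [hid]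
  exact key _ _ ε (hxE E hE hmE) (hyE E hE hmE)

lemma goodSet_limit (hc : IsContNorm N.α) {B δ ε : ℝ≥0∞} {h : ℕ → 𝕋 → ℂ} {g : 𝕋 → ℂ}
    (hmem : ∀ k, h k ∈ GoodSet N B δ ε) (hg : AEMeasurable g m)
    (htend : TendstoInMeasure m h atTop g) : g ∈ GoodSet N B δ ε := by
  refine ⟨hg, N.alpha_fatou hc (fun k => (hmem k).1) hg htend (fun k => (hmem k).2.1), ?_⟩
  intro E hE hmE
  have htendE : TendstoInMeasure m (fun k => E.indicator (h k)) atTop (E.indicator g) := by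
    refine tendstoInMeasure_iff_dist.mpr fun r hr => ?_
    have hsub : ∀ k, {x | r ≤ dist (E.indicator (h k) x) (E.indicator g x)} ⊆
        {x | r ≤ dist (h k x) (g x)} := by
      intro k x hx
      by_cases hxE : x ∈ E
      · simpa [Set.indicator_of_mem hxE] using hx
      · exfalso
        simp only [Set.mem_setOf_eq, Set.indicator_of_notMem hxE, dist_self] at hx
        exact absurd hx (not_le.mpr hr)
    exact tendsto_of_tendsto_of_tendsto_of_le_of_le tendsto_const_nhds (tendstoInMeasure_iff_dist.mp htend r hr)
      (fun k => bot_le) (fun k => measure_mono (hsub k))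
  exact N.alpha_fatou hc (fun k => ((hmem k).1.indicator hE)) (hg.indicator hE) htendE
    (fun k => (hmem k).2.2 E hE hmE)

lemma generator_good (hc : IsContNorm N.α) {g : 𝕋 → ℂ} (hg : MemL N.α g)
    {ε : ℝ≥0∞} (hε : 0 < ε) :
    ∃ δ : ℝ≥0∞, 0 < δ ∧
      {F : 𝕋 → ℂ | ∃ u : 𝕋 → ℂ, MemLp u ⊤ m ∧ eLpNorm u ⊤ m ≤ 1 ∧
        ∃ φ : 𝕋 ≃ᵐ 𝕋, MeasurePreserving (⇑φ) m m ∧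
          (∀ h : 𝕋 → ℂ, MemLp h ⊤ m → N.α (h ∘ ⇑φ) = N.α h) ∧
          F = fun z => ((‖g (φ z)‖ : ℝ) : ℂ) * u z} ⊆ GoodSet N (N.α g) δ ε := by
  have gmeas : AEMeasurable g m := hg.1.1
  have hε2 : 0 < ε / 2 := ENNReal.half_pos hε.ne'
  obtain ⟨g₀, hg₀mem, hg₀close⟩ := hg.2 (ε / 2) hε2
  have g₀meas : AEMeasurable g₀ m := hg₀mem.aestronglyMeasurable.aemeasurable
  set Cn : ℝ≥0 := (eLpNorm g₀ ⊤ m).toNNReal with hCn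
  have hCfin : eLpNorm g₀ ⊤ m ≠ ∞ := hg₀mem.2.ne
  have hg₀bd : ∀ᵐ z ∂m, ‖g₀ z‖ ≤ (Cn : ℝ) := by
    filter_upwards [ae_le_eLpNormEssSup (f := g₀) (μ := m)] with z hz
    have h2 : (‖g₀ z‖₊ : ℝ≥0∞) ≤ (Cn : ℝ≥0∞) := by
      rw [hCn, ENNReal.coe_toNNReal hCfin, eLpNorm_exponent_top]
      exact hz
    exact_mod_cast h2
  have hεpos' : (0 : ℝ≥0∞) < (ε / 2) / ((Cn : ℝ≥0∞) + 1) :=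
    ENNReal.div_pos hε2.ne' (by simp)
  obtain ⟨δ, hδpos, hδ⟩ := hc _ hεpos'
  refine ⟨δ, hδpos, ?_⟩
  rintro F ⟨u, humem, hubd, φ, hφ, hαφ, rfl⟩
  have humeas : AEMeasurable u m := humem.aestronglyMeasurable.aemeasurable
  have hu1 : ∀ᵐ z ∂m, ‖u z‖ ≤ 1 := by
    filter_upwards [ae_le_eLpNormEssSup (f := u) (μ := m)] with z hz
    have h2 : (‖u z‖₊ : ℝ≥0∞) ≤ 1 := hz.trans (by rwa [← eLpNorm_exponent_top])
    exact_mod_cast h2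
  have hgφ : AEMeasurable (g ∘ ⇑φ) m :=
    gmeas.comp_quasiMeasurePreserving hφ.quasiMeasurePreserving
  have hFmeas : AEMeasurable (fun z => ((‖g (φ z)‖ : ℝ) : ℂ) * u z) m :=
    (Complex.measurable_ofReal.comp_aemeasurable hgφ.norm).mul humeas
  have hFbd : ∀ᵐ z ∂m, ‖((‖g (φ z)‖ : ℝ) : ℂ) * u z‖ ≤ ‖(g ∘ ⇑φ) z‖ := by
    filter_upwards [hu1] with z hz
    rw [norm_mul, Complex.norm_real, Real.norm_eq_abs, abs_of_nonneg (norm_nonneg _)]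
    calc ‖g (φ z)‖ * ‖u z‖ ≤ ‖g (φ z)‖ * 1 := by
          exact mul_le_mul_of_nonneg_left hz (norm_nonneg _)
      _ = ‖(g ∘ ⇑φ) z‖ := by simp [Function.comp]
  have hαF : N.α (fun z => ((‖g (φ z)‖ : ℝ) : ℂ) * u z) ≤ N.α g :=
    (N.alpha_mono hFmeas hgφ hFbd).trans (N.alpha_comp_le hφ hαφ gmeas)
  refine ⟨hFmeas, hαF, ?_⟩
  intro E hE hmE
  set E' : Set 𝕋 := ⇑φ.symm ⁻¹' E with hE'def
  have hE' : MeasurableSet E' := φ.symm.measurable hE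
  have hsymm : MeasurePreserving (⇑φ.symm) m m := MeasurePreserving.symm φ hφ
  have hmE' : m E' < δ := by
    rw [hE'def, hsymm.measure_preimage hE.nullMeasurableSet]
    exact hmE
  have hgabs : AEMeasurable (fun z => ((‖g z‖ : ℝ) : ℂ)) m :=
    Complex.measurable_ofReal.comp_aemeasurable gmeas.norm
  -- step 1: compare with the composed indicator
  have hid : (E'.indicator (fun z => ((‖g z‖ : ℝ) : ℂ))) ∘ ⇑φ
      = E.indicator (fun z => ((‖g (φ z)‖ : ℝ) : ℂ)) := by
    funext z
    have hmemiff : φ z ∈ E' ↔ z ∈ E := by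
      rw [hE'def, Set.mem_preimage, MeasurableEquiv.symm_apply_apply]
    by_cases hz : z ∈ E
    · rw [Set.indicator_of_mem hz, Function.comp_apply,
        Set.indicator_of_mem (hmemiff.mpr hz)]
    · rw [Set.indicator_of_notMem hz, Function.comp_apply,
        Set.indicator_of_notMem (fun hmem => hz (hmemiff.mp hmem))]
  have hstep1 : N.α (E.indicator (fun z => ((‖g (φ z)‖ : ℝ) : ℂ) * u z))
      ≤ N.α (E.indicator (fun z => ((‖g (φ z)‖ : ℝ) : ℂ))) := by
    refine N.alpha_mono (hFmeas.indicator hE)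
      ((Complex.measurable_ofReal.comp_aemeasurable hgφ.norm).indicator hE) ?_
    filter_upwards [hu1] with z hz
    by_cases hzE : z ∈ E
    · rw [Set.indicator_of_mem hzE, Set.indicator_of_mem hzE]
      have h4 : ‖((‖g (φ z)‖ : ℝ) : ℂ)‖ = ‖g (φ z)‖ := by simp
      rw [norm_mul, h4]
      calc ‖g (φ z)‖ * ‖u z‖ ≤ ‖g (φ z)‖ * 1 :=
            mul_le_mul_of_nonneg_left hz (norm_nonneg _)
        _ = ‖g (φ z)‖ := mul_one _
    · rw [Set.indicator_of_notMem hzE, Set.indicator_of_notMem hzE]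
  have hstep2 : N.α (E.indicator (fun z => ((‖g (φ z)‖ : ℝ) : ℂ)))
      ≤ N.α (E'.indicator (fun z => ((‖g z‖ : ℝ) : ℂ))) := by
    rw [← hid]
    exact N.alpha_comp_le hφ hαφ (hgabs.indicator hE')
  -- step 3: split |g| into |g - g₀| and |g₀|
  set q : 𝕋 → ℂ := (fun z => ((‖g z - g₀ z‖ : ℝ) : ℂ))
      + E'.indicator (fun z => ((‖g₀ z‖ : ℝ) : ℂ)) with hqdef
  have hqmeas : AEMeasurable q m :=
    (Complex.measurable_ofReal.comp_aemeasurable (gmeas.sub g₀meas).norm).add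
      ((Complex.measurable_ofReal.comp_aemeasurable g₀meas.norm).indicator hE')
  have hstep3 : N.α (E'.indicator (fun z => ((‖g z‖ : ℝ) : ℂ))) ≤ N.α q := by
    refine N.alpha_mono (hgabs.indicator hE') hqmeas (Filter.Eventually.of_forall fun z => ?_)
    have hq1 : q z = ((‖g z - g₀ z‖ + E'.indicator (fun w => ‖g₀ w‖) z : ℝ) : ℂ) := by
      rw [hqdef]
      by_cases hz : z ∈ E' <;>
        simp [Pi.add_apply, Set.indicator_of_mem, Set.indicator_of_notMem, hz]
    have hqnn : (0:ℝ) ≤ ‖g z - g₀ z‖ + E'.indicator (fun w => ‖g₀ w‖) z := by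
      have : (0:ℝ) ≤ E'.indicator (fun w => ‖g₀ w‖) z := by
        by_cases hz : z ∈ E' <;>
          simp [Set.indicator_of_mem, Set.indicator_of_notMem, hz, norm_nonneg]
      positivity
    rw [hq1, Complex.norm_real, Real.norm_eq_abs, abs_of_nonneg hqnn]
    by_cases hz : z ∈ E'
    · rw [Set.indicator_of_mem hz, Set.indicator_of_mem hz, Complex.norm_real,
        Real.norm_eq_abs, abs_of_nonneg (norm_nonneg _)]
      calc ‖g z‖ = ‖(g z - g₀ z) + g₀ z‖ := by ring_nf
        _ ≤ ‖g z - g₀ z‖ + ‖g₀ z‖ := norm_add_le _ _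
    · rw [Set.indicator_of_notMem hz, Set.indicator_of_notMem hz]
      simpa using hqnn
  have hstep4 : N.α q ≤ ε := by
    have habs : N.α (fun z => ((‖g z - g₀ z‖ : ℝ) : ℂ)) = N.α (g - g₀) := by
      have h2 := N.abs_eq (g - g₀)
      simpa [Pi.sub_apply] using h2
    have hind : N.α (E'.indicator (fun z => ((‖g₀ z‖ : ℝ) : ℂ)))
        ≤ (Cn : ℝ≥0∞) * N.α (E'.indicator fun _ => (1 : ℂ)) := by
      refine N.alpha_indicator_le_of_bound
        (Complex.measurable_ofReal.comp_aemeasurable g₀meas.norm) ?_ hE'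
      filter_upwards [hg₀bd] with z hz
      simpa [Function.comp] using hz
    calc N.α q ≤ N.α (fun z => ((‖g z - g₀ z‖ : ℝ) : ℂ))
          + N.α (E'.indicator (fun z => ((‖g₀ z‖ : ℝ) : ℂ))) := N.add_le _ _
      _ ≤ ε / 2 + (Cn : ℝ≥0∞) * N.α (E'.indicator fun _ => (1 : ℂ)) := by
          rw [habs]
          exact add_le_add hg₀close.le hind
      _ ≤ ε / 2 + ((Cn : ℝ≥0∞) + 1) * ((ε / 2) / ((Cn : ℝ≥0∞) + 1)) := by
          gcongr
          · simp
          · exact (hδ E' hE' hmE').le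
      _ = ε / 2 + ε / 2 := by
          rw [ENNReal.mul_div_cancel' (by simp) (by simp)]
      _ = ε := ENNReal.add_halves ε
  exact ((hstep1.trans hstep2).trans hstep3).trans hstep4
end RotNorm

/-- **Dominated Convergence Theorem.** Let α be a continuous rotationally
symmetric norm, `g ∈ L^α(𝕋)`, and let `K` be the convex hull of
`{|g∘φ|·u : ‖u‖_∞ ≤ 1, φ ∈ G_α}` where `G_α` is the set of invertible measure-preserving
maps preserving α. If `|F n|` lies in the closure of `K` in measure for each `n` and
`F n → f` in measure, then `f ∈ L^α(𝕋)` and `α(F n − f) → 0`. -/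
theorem dominated_convergence
    (N : RotNorm) (hc : IsContNorm N.α)
    (g : 𝕋 → ℂ) (hg : MemL N.α g)
    (K : Set (𝕋 → ℂ))
    (hK : K = convexHull ℝ {F : 𝕋 → ℂ | ∃ u : 𝕋 → ℂ, MemLp u ⊤ m ∧ eLpNorm u ⊤ m ≤ 1 ∧
        ∃ φ : 𝕋 ≃ᵐ 𝕋, MeasurePreserving (⇑φ) m m ∧
          (∀ h : 𝕋 → ℂ, MemLp h ⊤ m → N.α (h ∘ ⇑φ) = N.α h) ∧
          F = fun z => ((‖g (φ z)‖ : ℝ) : ℂ) * u z})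
    (F : ℕ → 𝕋 → ℂ) (f : 𝕋 → ℂ)
    (hFmeas : ∀ n, AEMeasurable (F n) m) (hfmeas : AEMeasurable f m)
    (hmem : ∀ n, ∃ G : ℕ → 𝕋 → ℂ, (∀ k, G k ∈ K) ∧
      TendstoInMeasure m G atTop (fun z => ((‖F n z‖ : ℝ) : ℂ)))
    (hconv : TendstoInMeasure m F atTop f) :
    MemL N.α f ∧ Tendsto (fun n => N.α (F n - f)) atTop (nhds 0) := by
  classical
  set B := N.α g with hB
  -- the key uniform estimate
  have key : ∀ ε : ℝ≥0∞, 0 < ε → ∃ δ : ℝ≥0∞, 0 < δ ∧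
      (∀ n, F n ∈ RotNorm.GoodSet N B δ ε) ∧ f ∈ RotNorm.GoodSet N B δ ε := by
    intro ε hε
    obtain ⟨δ, hδpos, hgen⟩ := N.generator_good hc hg hε
    have hKsub : K ⊆ RotNorm.GoodSet N B δ ε := by
      rw [hK]
      exact convexHull_min hgen (N.goodSet_convex B δ ε)
    have hFn : ∀ n, F n ∈ RotNorm.GoodSet N B δ ε := by
      intro n
      obtain ⟨G, hGK, hGtend⟩ := hmem n
      have habs : (fun z => ((‖F n z‖ : ℝ) : ℂ)) ∈ RotNorm.GoodSet N B δ ε :=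
        N.goodSet_limit hc (fun k => hKsub (hGK k))
          (Complex.measurable_ofReal.comp_aemeasurable (hFmeas n).norm) hGtend
      obtain ⟨h1, h2, h3⟩ := habs
      refine ⟨hFmeas n, ?_, ?_⟩
      · rw [← N.abs_eq (F n)]; exact h2
      · intro E hE hmE
        have hid : (fun z => ((‖(E.indicator (F n)) z‖ : ℝ) : ℂ))
            = E.indicator (fun z => ((‖F n z‖ : ℝ) : ℂ)) := by
          funext z; by_cases hz : z ∈ E <;> simp [hz]
        rw [← N.abs_eq (E.indicator (F n)), hid]
        exact h3 E hE hmE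
    exact ⟨δ, hδpos, hFn, N.goodSet_limit hc hFn hfmeas hconv⟩
  have hfB : N.α f ≤ B := by
    obtain ⟨δ, -, -, hf⟩ := key 1 zero_lt_one
    exact hf.2.1
  have hBfin : B ≠ ∞ := hg.1.2
  have hfscript : MemScriptL N.α f := ⟨hfmeas, ne_top_of_le_ne_top hBfin hfB⟩
  constructor
  · -- f ∈ L^α
    refine ⟨hfscript, ?_⟩
    intro ε hε
    set ε₁ := min ε 1 with hε₁
    have hε₁pos : 0 < ε₁ := lt_min hε zero_lt_one
    have hε₁top : ε₁ ≠ ∞ := ((min_le_right ε 1).trans_lt ENNReal.one_lt_top).ne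
    have hhalf : ε₁ / 2 < ε :=
      lt_of_lt_of_le (ENNReal.half_lt_self hε₁pos.ne' hε₁top) (min_le_left _ _)
    have hhalfpos : 0 < ε₁ / 2 := ENNReal.half_pos hε₁pos.ne'
    obtain ⟨δ, hδpos, -, hfGood⟩ := key (ε₁ / 2) hhalfpos
    set f' := hfmeas.mk f with hf'
    have hf'meas : Measurable f' := hfmeas.measurable_mk
    set Em : ℕ → Set 𝕋 := fun M => {z | (M : ℝ) ≤ ‖f' z‖} with hEm
    have hEmmeas : ∀ M, MeasurableSet (Em M) :=
      fun M => measurableSet_le measurable_const hf'meas.norm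
    have hEmanti : Antitone Em := by
      intro M M' hMM' z hz
      have hz' : (M' : ℝ) ≤ ‖f' z‖ := hz
      have hle : (M : ℝ) ≤ (M' : ℝ) := by exact_mod_cast hMM'
      exact hle.trans hz'
    have hEmempty : ⋂ M, Em M = ∅ := by
      ext z
      simp only [Set.mem_iInter, Set.mem_empty_iff_false, iff_false, not_forall]
      obtain ⟨M, hM⟩ := exists_nat_gt ‖f' z‖
      exact ⟨M, not_le.mpr hM⟩
    have htendM : Tendsto (fun M => m (Em M)) atTop (nhds 0) := by
      have h2 := tendsto_measure_iInter_atTop (μ := m)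
        (fun M => (hEmmeas M).nullMeasurableSet) hEmanti ⟨0, measure_ne_top m _⟩
      rw [hEmempty] at h2
      exact (by simpa using h2 : Tendsto (⇑m ∘ Em) atTop (nhds 0))
    obtain ⟨M, hM⟩ := (htendM.eventually_lt_const hδpos).exists
    refine ⟨(Em M)ᶜ.indicator f', ?_, ?_⟩
    · refine memLp_top_of_bound
        (hf'meas.indicator (hEmmeas M).compl).aestronglyMeasurable M
        (Filter.Eventually.of_forall fun z => ?_)
      by_cases hz : z ∈ (Em M)ᶜ
      · rw [Set.indicator_of_mem hz]
        have h3 : ¬ ((M : ℝ) ≤ ‖f' z‖) := hz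
        exact (not_le.mp h3).le
      · rw [Set.indicator_of_notMem hz]
        simp
    · have heq : f - (Em M)ᶜ.indicator f' =ᵐ[m] (Em M).indicator f := by
        filter_upwards [hfmeas.ae_eq_mk] with z hz
        by_cases hzE : z ∈ Em M
        · have hzc : z ∉ (Em M)ᶜ := by simpa using hzE
          simp only [Pi.sub_apply, Set.indicator_of_notMem hzc,
            Set.indicator_of_mem hzE, sub_zero]
        · have hzc : z ∈ (Em M)ᶜ := hzE
          simp only [Pi.sub_apply, Set.indicator_of_mem hzc,
            Set.indicator_of_notMem hzE, hz, sub_self, ← hf']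
      rw [N.ae_eq _ _ heq]
      exact lt_of_le_of_lt (hfGood.2.2 (Em M) (hEmmeas M) hM) hhalf
  · -- convergence in α-norm
    rw [ENNReal.tendsto_nhds_zero]
    intro ε hε
    have hε3 : 0 < ε / 3 := ENNReal.div_pos hε.ne' (by norm_num)
    obtain ⟨δ, hδpos, hFGood, hfGood⟩ := key (ε / 3) hε3
    obtain ⟨η, hη0, hηlt⟩ := ENNReal.lt_iff_exists_nnreal_btwn.mp hε3
    have hηpos : (0 : ℝ) < (η : ℝ) := by exact_mod_cast hη0
    set f' := hfmeas.mk f with hf'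
    set F' : ℕ → 𝕋 → ℂ := fun n => (hFmeas n).mk _ with hF'
    have hconv' : TendstoInMeasure m F' atTop f' :=
      hconv.congr (fun n => (hFmeas n).ae_eq_mk) hfmeas.ae_eq_mk
    have hev := (tendstoInMeasure_iff_dist.mp hconv' (η : ℝ) hηpos).eventually_lt_const hδpos
    filter_upwards [hev] with n hn
    set E : Set 𝕋 := {z | (η : ℝ) ≤ dist (F' n z) (f' z)} with hEdef
    have hEmeas : MeasurableSet E :=
      measurableSet_le measurable_const ((hFmeas n).measurable_mk.dist hfmeas.measurable_mk)
    have hae : F n - f =ᵐ[m] F' n - f' :=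
      ((hFmeas n).ae_eq_mk).sub hfmeas.ae_eq_mk
    rw [N.ae_eq _ _ hae]
    have h1 : N.α (E.indicator (F' n - f')) ≤ ε / 3 + ε / 3 := by
      have hid : E.indicator (F' n - f') = E.indicator (F' n) - E.indicator f' := by
        funext z; by_cases hz : z ∈ E <;> simp [hz]
      rw [hid]
      refine (N.alpha_sub_le _ _).trans (add_le_add ?_ ?_)
      · have h2 : N.α (E.indicator (F' n)) = N.α (E.indicator (F n)) := by
          refine N.ae_eq _ _ ?_
          filter_upwards [(hFmeas n).ae_eq_mk] with z hz
          by_cases hzE : z ∈ E <;>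
            simp [Set.indicator_of_mem, Set.indicator_of_notMem, hzE, hz, hF']
        rw [h2]
        exact (hFGood n).2.2 E hEmeas hn
      · have h2 : N.α (E.indicator f') = N.α (E.indicator f) := by
          refine N.ae_eq _ _ ?_
          filter_upwards [hfmeas.ae_eq_mk] with z hz
          by_cases hzE : z ∈ E <;>
            simp [Set.indicator_of_mem, Set.indicator_of_notMem, hzE, hz, hf']
        rw [h2]
        exact hfGood.2.2 E hEmeas hn
    have h2 : N.α (Eᶜ.indicator (F' n - f')) ≤ (η : ℝ≥0∞) := by
      refine N.alpha_le_of_bound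
        (((hFmeas n).measurable_mk.sub hfmeas.measurable_mk).aemeasurable.indicator hEmeas.compl)
        (Filter.Eventually.of_forall fun z => ?_)
      by_cases hz : z ∈ Eᶜ
      · rw [Set.indicator_of_mem hz]
        have h3 : ¬ ((η : ℝ) ≤ dist (F' n z) (f' z)) := hz
        rw [dist_eq_norm] at h3
        simpa [Pi.sub_apply] using (not_le.mp h3).le
      · rw [Set.indicator_of_notMem hz]
        simp
    calc N.α (F' n - f')
        ≤ N.α (E.indicator (F' n - f')) + N.α (Eᶜ.indicator (F' n - f')) := by
          conv_lhs => rw [← Set.indicator_self_add_compl E (F' n - f')]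
          exact N.add_le _ _
      _ ≤ (ε / 3 + ε / 3) + (η : ℝ≥0∞) := add_le_add h1 h2
      _ ≤ ε / 3 + ε / 3 + ε / 3 := add_le_add le_rfl hηlt.le
      _ = ε := ENNReal.add_thirds ε
end
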